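/- Work in the category of types with its cartesian monoidal structure, fix n ∈ ℕ, and let G X = Option (ℕ × X) and H X = Option (ℕ × X × X) be the lax monoidal endofunctors with ∇^G(some (x, c), some (y, a)) = some (x + y, (c, a)), ∇^H(some (x, c_ℓ, c_r), some (y, a_ℓ, a_r)) = some (x + y, (c_ℓ, a_ℓ), (c_r, a_r)) (none otherwise in both cases), η^G(⋆) = some (0, ⋆), η^H(⋆) = some (0, ⋆, ⋆). Let μ : G ⟶ H be the monoidal natural transformation μ_X(some (x, c)) = some (x, c, c), μ_X(none) = none. Let ℕ*_n be the type of lists over ℕ of length at most n, a G-coalgebra via χ(nil) = none and χ(x :: l) = some (x, l), and let μ_*(ℕ*_n) be the pushforward H-coalgebra (ℕ*_n, μ ∘ χ), so x :: l ↦ some (x, l, l). Let T_n be the type of finite ℕ-labelled binary trees of depth at most n, an H-algebra via α(none) = empty and α(some (x, ℓ, r)) = the tree node x ℓ r pruned to depth at most n (all nodes at depth exceeding n removed). Then T_n is μ_*(ℕ*_n)-initial: for every H-algebra (B, β) there exists exactly one H-measuring μ_*(ℕ*_n) × T_n → B. -/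

import Mathlib

namespace PaperStmt

/-- Finite binary trees with ℕ-labelled nodes. -/
inductive BTree : Type
  | empty : BTree
  | node : ℕ → BTree → BTree → BTree

/-- The action of the endofunctor `H X = Option (ℕ × X × X)` on functions. -/
def hMap {X Y : Type} (f : X → Y) : Option (ℕ × X × X) → Option (ℕ × Y × Y) :=
  Option.map fun p => (p.1, f p.2.1, f p.2.2)

/-- The lax monoidal structure map `∇^H_{X,Y}` of `H X = Option (ℕ × X × X)`. -/
def hNabla {X Y : Type} :
    Option (ℕ × X × X) → Option (ℕ × Y × Y) → Option (ℕ × (X × Y) × (X × Y))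
  | some (x, cl, cr), some (y, al, ar) => some (x + y, (cl, al), (cr, ar))
  | _, _ => none

/-- `φ : C × A → B` is an `H`-measuring from `(A, α)` to `(B, β)` by `(C, χ)`. -/
def IsHMeasuring {A B C : Type} (α : Option (ℕ × A × A) → A)
    (β : Option (ℕ × B × B) → B) (χ : C → Option (ℕ × C × C))
    (φ : C × A → B) : Prop :=
  ∀ (c : C) (v : Option (ℕ × A × A)), φ (c, α v) = β (hMap φ (hNabla (χ c) v))

/-- Lists over ℕ of length at most `n`. -/
def ListN (n : ℕ) : Type := { l : List ℕ // l.length ≤ n }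

/-- The `G`-coalgebra structure on `ListN n` (for `G X = Option (ℕ × X)`):
`nil ↦ none` and `x :: l ↦ some (x, l)`. -/
def listChi (n : ℕ) : ListN n → Option (ℕ × ListN n)
  | ⟨[], _⟩ => none
  | ⟨x :: l, hl⟩ => some (x, ⟨l, Nat.le_of_succ_le hl⟩)

/-- The pushforward `H`-coalgebra structure on `ListN n` along
`μ : G ⟶ H`, `μ_X (some (x, c)) = some (x, c, c)`: so `x :: l ↦ some (x, l, l)`. -/
def pushChi (n : ℕ) (c : ListN n) : Option (ℕ × ListN n × ListN n) :=
  Option.map (fun p => (p.1, p.2, p.2)) (listChi n c)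

/-- Depth of a binary tree. -/
def depth : BTree → ℕ
  | .empty => 0
  | .node _ l r => max (depth l) (depth r) + 1

/-- `prune k t` removes all nodes of `t` at depth exceeding `k`. -/
def prune : ℕ → BTree → BTree
  | 0, _ => .empty
  | _ + 1, .empty => .empty
  | k + 1, .node x l r => .node x (prune k l) (prune k r)

lemma depth_prune_le (k : ℕ) (t : BTree) : depth (prune k t) ≤ k := by
  induction k generalizing t with
  | zero => simp [prune, depth]
  | succ k ih =>
    cases t with
    | empty => simp [prune, depth]
    | node x l r =>
      simp only [prune, depth]
      exact Nat.succ_le_succ (max_le (ih l) (ih r))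

/-- Binary trees of depth at most `n`. -/
def TreeN (n : ℕ) : Type := { t : BTree // depth t ≤ n }

/-- The `H`-algebra structure on `TreeN n`: `none ↦ empty`, and `some (x, ℓ, r)` is sent
to the tree `node x ℓ r` pruned to depth at most `n`. -/
def treeAlg (n : ℕ) : Option (ℕ × TreeN n × TreeN n) → TreeN n
  | none => ⟨.empty, Nat.zero_le n⟩
  | some (x, l, r) => ⟨prune n (.node x l.val r.val), depth_prune_le n _⟩

/-- Pruning to a bound at least the depth is the identity. -/
lemma prune_eq_of_depth_le : ∀ (k : ℕ) (t : BTree), depth t ≤ k → prune k t = t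
  | 0, .empty, _ => rfl
  | _ + 1, .empty, _ => rfl
  | k + 1, .node x l r, h => by
    simp only [depth, Nat.succ_le_succ_iff, max_le_iff] at h
    simp only [prune, prune_eq_of_depth_le k l h.1, prune_eq_of_depth_le k r h.2]
  | 0, .node _ l r, h => by simp [depth] at h

/-- The canonical measuring, defined on raw data. -/
def phi {B : Type} (β : Option (ℕ × B × B) → B) : List ℕ → BTree → B
  | _, .empty => β none
  | [], .node _ _ _ => β none
  | x :: l, .node y tl tr => β (some (x + y, phi β l tl, phi β l tr))

/-- `phi` only sees a tree up to depth = length of the list. -/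
lemma phi_prune {B : Type} (β : Option (ℕ × B × B) → B) :
    ∀ (l : List ℕ) (k : ℕ) (t : BTree), l.length ≤ k → phi β l (prune k t) = phi β l t := by
  intro l
  induction l with
  | nil =>
    intro k t _
    cases h : prune k t with
    | empty => cases t <;> simp [phi]
    | node y a b => cases t <;> simp [phi]
  | cons x l ih =>
    intro k t hk
    cases t with
    | empty => cases k <;> simp [prune]
    | node y a b =>
      cases k with
      | zero => simp at hk
      | succ k =>
        have hk' : l.length ≤ k := Nat.le_of_succ_le_succ hk
        simp only [prune, phi, ih k a hk', ih k b hk']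

theorem stmt19 (n : ℕ) (B : Type) (β : Option (ℕ × B × B) → B) :
    ∃! φ : ListN n × TreeN n → B, IsHMeasuring (treeAlg n) β (pushChi n) φ := by
  refine ⟨fun p => phi β p.1.val p.2.val, ?_, ?_⟩
  · rintro ⟨c, hc⟩ v
    cases c with
    | nil =>
      cases v with
      | none => simp [treeAlg, pushChi, listChi, hNabla, hMap, phi]
      | some p =>
        obtain ⟨y, tl, tr⟩ := p
        simp only [treeAlg, pushChi, listChi, Option.map_none, hNabla, hMap]
        rw [phi_prune β [] n _ (Nat.zero_le n)]
        simp [phi]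
    | cons x l =>
      cases v with
      | none => simp [treeAlg, pushChi, listChi, hNabla, hMap, phi]
      | some p =>
        obtain ⟨y, tl, tr⟩ := p
        simp only [treeAlg, pushChi, listChi, Option.map_some, hNabla, hMap]
        rw [phi_prune β (x :: l) n _ hc]
        simp [phi]
  · intro ψ hψ
    funext p
    obtain ⟨c, t⟩ := p
    obtain ⟨t, ht⟩ := t
    induction t generalizing c with
    | empty =>
      have hphi : ∀ l : List ℕ, phi β l .empty = β none := by
        intro l; cases l <;> rfl
      simpa [treeAlg, hNabla, hMap, hphi] using hψ c none
    | node y tl tr ihl ihr =>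
      have hd : max (depth tl) (depth tr) + 1 ≤ n := ht
      have htl : depth tl ≤ n := le_trans (le_max_left _ _) (Nat.le_of_succ_le hd)
      have htr : depth tr ≤ n := le_trans (le_max_right _ _) (Nat.le_of_succ_le hd)
      have halg : treeAlg n (some (y, ⟨tl, htl⟩, ⟨tr, htr⟩)) = ⟨.node y tl tr, ht⟩ := by
        apply Subtype.ext
        exact prune_eq_of_depth_le n _ ht
      have := hψ c (some (y, ⟨tl, htl⟩, ⟨tr, htr⟩))
      rw [halg] at this
      obtain ⟨c, hc⟩ := c
      cases c with
      | nil =>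
        simpa [pushChi, listChi, hNabla, hMap, phi] using this
      | cons x l =>
        have hl : l.length ≤ n := Nat.le_of_succ_le hc
        rw [this]
        simp only [pushChi, listChi, Option.map_some, hNabla, hMap, Option.map_some]
        rw [ihl ⟨l, hl⟩ htl, ihr ⟨l, hl⟩ htr]
        simp [phi]

end PaperStmt
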